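/- Let N ≥ 1. For each n = 0,…,N−1, fix a set T_n ⊆ {0,…,n} with n ∈ T_n and a permutation σ_n of T_n, and let ⋆ denote the associated causal product of N×N complex matrices. If A and B are positive semidefinite N×N complex matrices, then A ⋆ B is positive semidefinite. -/

import Mathlib

open Finset Matrix ComplexOrder

/-- The causal product determined by data `(T_n, σ_n)`: for `N × N` complex matrices,
`(A ⋆ B)_{jk} = ∑_{(p,q) ∈ T_j × T_k} a_{p,q} b_{σ_j(p), σ_k(q)}`. -/
noncomputable def causal {N : ℕ} (T : Fin N → Finset (Fin N))
    (σ : ∀ n, Equiv.Perm {x // x ∈ T n}) (A B : Matrix (Fin N) (Fin N) ℂ) :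
    Matrix (Fin N) (Fin N) ℂ :=
  Matrix.of fun j k =>
    ∑ p ∈ (T j).attach, ∑ q ∈ (T k).attach, A p.1 q.1 * B (σ j p).1 (σ k q).1

/-- If `A, B ∈ ℂ^{N×N}` are positive semidefinite, then so is their causal
product `A ⋆ B`, for any data `T_n ⊆ {0,…,n}` with `n ∈ T_n` and permutations
`σ_n : T_n → T_n`. -/
theorem causal_posSemidef {N : ℕ} (hN : 1 ≤ N) (T : Fin N → Finset (Fin N))
    (hT : ∀ n, T n ⊆ Finset.Iic n) (hmem : ∀ n, n ∈ T n)
    (σ : ∀ n, Equiv.Perm {x // x ∈ T n})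
    (A B : Matrix (Fin N) (Fin N) ℂ) (hA : A.PosSemidef) (hB : B.PosSemidef) :
    (causal T σ A B).PosSemidef := by
  classical
  have hK : (Matrix.kroneckerMap (· * ·) A B).PosSemidef := by
    exact hA.kronecker hB
  have hS := hK.submatrix
    (fun i : (Σ j : Fin N, {x // x ∈ T j}) => ((i.2.1 : Fin N), ((σ i.1 i.2).1 : Fin N)))
  refine posSemidef_iff_dotProduct_mulVec.mpr ⟨?_, ?_⟩
  · ext j k
    simp only [conjTranspose_apply, causal, of_apply, star_sum, star_mul']
    rw [Finset.sum_comm]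
    refine Finset.sum_congr rfl fun q _ => Finset.sum_congr rfl fun p _ => ?_
    rw [hB.1.apply, hA.1.apply, mul_comm]
  · intro x
    have h := hS.dotProduct_mulVec_nonneg (fun i => x i.1)
    refine le_of_le_of_eq h ?_
    simp only [dotProduct, Matrix.mulVec, Matrix.submatrix_apply,
      Matrix.kroneckerMap_apply, Pi.star_apply, causal, Matrix.of_apply,
      ← Finset.univ_sigma_univ]
    simp only [Finset.sum_sigma, Finset.univ_eq_attach]
    simp only [Finset.mul_sum, Finset.sum_mul, mul_assoc]
    refine Finset.sum_congr rfl fun j _ => ?_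
    exact Finset.sum_comm
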